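/- arXiv:1210.2951 — 9 statements merged into one kernel-verified Lean document; each statement's English description precedes it below -/
import Mathlib

section
/- Let F be a vector space over a field K, let T : F → F be a surjective linear map, let B ≤ F* be a finite-dimensional subspace, and let G : F → F be a linear right inverse of T (i.e., T ∘ G = id_F). Then (T(B^⊥))^⊥ = G*(B ∩ (Ker T)^⊥), where G* : F* → F* is the transpose of G. -/
/-- For a finite-dimensional subspace `B` of the dual, the double orthogonal of `B` is `B`. -/
lemma dualAnn_dualCoann_of_fd {K F : Type*} [Field K] [AddCommGroup F] [Module K F]
    (B : Submodule K (Module.Dual K F)) (hB : FiniteDimensional K B) :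
    B.dualCoannihilator.dualAnnihilator = B := by
  refine le_antisymm (fun β hβ => ?_) (Submodule.le_dualCoannihilator_dualAnnihilator B)
  rw [Submodule.mem_dualAnnihilator] at hβ
  obtain ⟨s, hsfin, hspan⟩ := Submodule.fg_def.mp
    (Module.Finite.iff_fg.mp (Module.Finite.equiv (LinearEquiv.refl K B)))
  have := hsfin.to_subtype
  have key : β ∈ Submodule.span K (Set.range fun i : s => (i : Module.Dual K F)) := by
    apply mem_span_of_iInf_ker_le_ker
    intro v hv
    simp only [Submodule.mem_iInf, LinearMap.mem_ker] at hv
    refine hβ v ?_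
    have hv' : v ∈ (Submodule.span K s).dualCoannihilator := by
      have := Submodule.coe_dualCoannihilator_span (R := K) (M := F) s
      rw [← SetLike.mem_coe, this]
      exact fun f hf => hv ⟨f, hf⟩
    rwa [hspan] at hv'
  rwa [Subtype.range_coe, hspan] at key

/-- For a surjective linear map T : F → F, a finite-dimensional subspace
B ≤ F*, and a linear right inverse G of T, we have
(T(B^⊥))^⊥ = G*(B ∩ (Ker T)^⊥). -/
theorem stmt1 {K F : Type*} [Field K] [AddCommGroup F] [Module K F]
    (T : F →ₗ[K] F) (hT : Function.Surjective T)
    (B : Submodule K (Module.Dual K F)) (hB : FiniteDimensional K B)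
    (G : F →ₗ[K] F) (hG : T ∘ₗ G = LinearMap.id) :
    (Submodule.map T B.dualCoannihilator).dualAnnihilator =
      Submodule.map G.dualMap (B ⊓ (LinearMap.ker T).dualAnnihilator) := by
  have hGT : ∀ β : Module.Dual K F, G.dualMap (T.dualMap β) = β := by
    intro β
    have : G.dualMap.comp T.dualMap = LinearMap.id := by
      rw [LinearMap.dualMap_comp_dualMap, hG]
      ext; simp
    exact congrFun (congrArg DFunLike.coe this) β
  have hrange : LinearMap.range T.dualMap = (LinearMap.ker T).dualAnnihilator :=
    T.range_dualMap_eq_dualAnnihilator_ker_of_surjective hT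
  -- LHS equals comap T.dualMap B
  have hLHS : (Submodule.map T B.dualCoannihilator).dualAnnihilator
      = Submodule.comap T.dualMap B := by
    ext β
    simp only [Submodule.mem_dualAnnihilator, Submodule.mem_map, Submodule.mem_comap]
    constructor
    · intro h
      rw [← dualAnn_dualCoann_of_fd B hB, Submodule.mem_dualAnnihilator]
      intro v hv
      exact h (T v) ⟨v, hv, rfl⟩
    · rintro h _ ⟨v, hv, rfl⟩
      rw [← dualAnn_dualCoann_of_fd B hB, Submodule.mem_dualAnnihilator] at h
      exact h v hv
  rw [hLHS, ← hrange]
  ext β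
  simp only [Submodule.mem_comap, Submodule.mem_map, Submodule.mem_inf, LinearMap.mem_range]
  constructor
  · intro h
    exact ⟨T.dualMap β, ⟨h, ⟨β, rfl⟩⟩, hGT β⟩
  · rintro ⟨γ, ⟨hγB, δ, rfl⟩, rfl⟩
    rwa [hGT δ]
end

section
/- Let F be a vector space over a field K, let T : F → F be a surjective linear map whose kernel has a basis u_1, …, u_n, and let β_1, …, β_m ∈ F* be linearly independent with span B such that the m×n evaluation matrix M = (β_i(u_j)) has full column rank. Let N be an n×m matrix over K with N·M = 1_n (a left inverse of M), and define β̃_i = Σ_{j=1}^m N_{ij} β_j for i = 1, …, n, with span B̃ ≤ B. Then the boundary problem (T, B̃) is regular, i.e., F = Ker T ∔ B̃^⊥. -/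
/-- Let T : F → F be surjective with Ker T having basis u_1,…,u_n, and
β_1,…,β_m ∈ F* linearly independent with span B such that the evaluation matrix
M = (β_i(u_j)) has full column rank. If N·M = 1_n and β̃_i = Σ_j N_{ij} β_j with span B̃,
then B̃ ≤ B and the boundary problem (T, B̃) is regular, i.e. F = Ker T ∔ B̃^⊥. -/
theorem stmt3 {K F : Type*} [Field K] [AddCommGroup F] [Module K F]
    {n m : ℕ} (T : F →ₗ[K] F) (hT : Function.Surjective T)
    (u : Module.Basis (Fin n) K (LinearMap.ker T))
    (β : Fin m → Module.Dual K F) (hβ : LinearIndependent K β)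
    (B : Submodule K (Module.Dual K F)) (hB : B = Submodule.span K (Set.range β))
    (M : Matrix (Fin m) (Fin n) K) (hM : ∀ i j, M i j = β i (u j : F))
    (hrank : M.rank = n)
    (N : Matrix (Fin n) (Fin m) K) (hN : N * M = 1)
    (βt : Fin n → Module.Dual K F) (hβt : ∀ i, βt i = ∑ j, N i j • β j)
    (Bt : Submodule K (Module.Dual K F)) (hBt : Bt = Submodule.span K (Set.range βt)) :
    Bt ≤ B ∧ IsCompl (LinearMap.ker T) Bt.dualCoannihilator := by
  subst hB hBt
  have key : ∀ i j, βt i (u j : F) = if i = j then 1 else 0 := by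
    intro i j
    have h1 : (N * M) i j = (1 : Matrix (Fin n) (Fin n) K) i j := by rw [hN]
    rw [Matrix.one_apply] at h1
    rw [hβt]
    simp only [LinearMap.sum_apply, LinearMap.smul_apply, smul_eq_mul]
    rw [← h1, Matrix.mul_apply]
    exact Finset.sum_congr rfl fun k _ => by rw [hM]
  have hmem : ∀ v : F,
      v ∈ (Submodule.span K (Set.range βt)).dualCoannihilator ↔ ∀ i, βt i v = 0 := by
    intro v
    rw [Submodule.mem_dualCoannihilator]
    constructor
    · intro h i; exact h _ (Submodule.subset_span ⟨i, rfl⟩)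
    · intro h φ hφ
      induction hφ using Submodule.span_induction with
      | mem x hx => obtain ⟨i, rfl⟩ := hx; exact h i
      | zero => simp
      | add x y _ _ hx hy => simp [hx, hy]
      | smul c x _ hx => simp [hx]
  have hval : ∀ (w : LinearMap.ker T) (i : Fin n), βt i (w : F) = u.repr w i := by
    intro w i
    conv_lhs => rw [← u.sum_repr w]
    push_cast
    rw [map_sum]
    simp only [map_smul, key, smul_eq_mul, mul_ite, mul_one, mul_zero]
    simp
  constructor
  · rw [Submodule.span_le]
    rintro _ ⟨i, rfl⟩
    rw [hβt]
    exact Submodule.sum_mem _ fun j _ =>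
      Submodule.smul_mem _ _ (Submodule.subset_span ⟨j, rfl⟩)
  constructor
  · rw [disjoint_iff_inf_le]
    rintro v ⟨hv1, hv2'⟩
    have hv2 := (hmem v).1 hv2'
    have : (⟨v, hv1⟩ : LinearMap.ker T) = 0 := by
      apply u.repr.injective
      ext i
      simp [← hval ⟨v, hv1⟩ i, hv2 i]
    simpa using congrArg Subtype.val this
  · rw [codisjoint_iff_le_sup]
    intro v _
    set p : F := ∑ i, βt i v • (u i : F) with hp
    have hpker : p ∈ LinearMap.ker T := by
      exact Submodule.sum_mem _ fun i _ => Submodule.smul_mem _ _ (u i).2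
    refine Submodule.mem_sup.2 ⟨p, hpker, v - p, ?_, by abel⟩
    rw [hmem]
    intro i
    have : βt i p = βt i v := by
      rw [hp, map_sum]
      simp only [map_smul, key, smul_eq_mul, mul_ite, mul_one, mul_zero]
      simp
    simp [this]
end

section
/- Let F be a vector space over a field K, T : F → F a surjective linear map, B ≤ F* a finite-dimensional subspace with B^⊥ ∩ Ker T = {0}, and E ≤ F a subspace with F = T(B^⊥) ∔ E; let Q : F → F be the projection onto T(B^⊥) along E. Let B̃ ≤ B be a subspace with F = Ker T ∔ B̃^⊥, and let G̃ : F → F be the Green's operator of the regular boundary problem (T, B̃), i.e., the linear map satisfying T(G̃f) = f and G̃f ∈ B̃^⊥ for all f ∈ F. Then for every f ∈ F, the element G̃(Qf) lies in B^⊥ and satisfies T(G̃(Qf)) = Qf; moreover it is the unique element u ∈ B^⊥ with Tu = Qf. Hence G̃ ∘ Q is the generalized Green's operator of (T, B, E). -/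
/-- Let (T, B, E) be a regular generalized boundary problem, Q the
projection onto T(B^⊥) along E, B̃ ≤ B with (T, B̃) regular, and G̃ the Green's operator
of (T, B̃). Then for every f, G̃(Qf) ∈ B^⊥ and T(G̃(Qf)) = Qf, and G̃(Qf) is the unique
such element; hence G̃ ∘ Q is the generalized Green's operator of (T, B, E). -/
theorem stmt4 {K F : Type*} [Field K] [AddCommGroup F] [Module K F]
    (T : F →ₗ[K] F) (hT : Function.Surjective T)
    (B : Submodule K (Module.Dual K F)) (hB : FiniteDimensional K B)
    (huniq : B.dualCoannihilator ⊓ LinearMap.ker T = ⊥)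
    (E : Submodule K F) (hE : IsCompl (Submodule.map T B.dualCoannihilator) E)
    (Q : F →ₗ[K] F)
    (hQ : ∀ f, Q f ∈ Submodule.map T B.dualCoannihilator ∧ f - Q f ∈ E)
    (Bt : Submodule K (Module.Dual K F)) (hBtB : Bt ≤ B)
    (hreg : IsCompl (LinearMap.ker T) Bt.dualCoannihilator)
    (Gt : F →ₗ[K] F)
    (hGt : ∀ f, T (Gt f) = f ∧ Gt f ∈ Bt.dualCoannihilator) :
    ∀ f, Gt (Q f) ∈ B.dualCoannihilator ∧ T (Gt (Q f)) = Q f ∧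
      ∀ u ∈ B.dualCoannihilator, T u = Q f → u = Gt (Q f) := by
  intro f
  -- B^⊥ ≤ B̃^⊥
  have hsub : B.dualCoannihilator ≤ Bt.dualCoannihilator := by
    intro v hv
    rw [Submodule.mem_dualCoannihilator] at hv ⊢
    exact fun φ hφ => hv φ (hBtB hφ)
  obtain ⟨v, hvB, hvT⟩ := (hQ f).1
  have hTG : T (Gt (Q f)) = Q f := (hGt (Q f)).1
  -- Gt (Q f) = v
  have hkey : Gt (Q f) = v := by
    have h1 : Gt (Q f) - v ∈ LinearMap.ker T := by
      rw [LinearMap.mem_ker, map_sub, hTG, hvT, sub_self]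
    have h2 : Gt (Q f) - v ∈ Bt.dualCoannihilator :=
      Submodule.sub_mem _ (hGt (Q f)).2 (hsub hvB)
    have := hreg.inf_eq_bot
    have h3 : Gt (Q f) - v ∈ LinearMap.ker T ⊓ Bt.dualCoannihilator := ⟨h1, h2⟩
    rw [this, Submodule.mem_bot] at h3
    exact sub_eq_zero.mp h3
  refine ⟨hkey ▸ hvB, hTG, fun u hu hTu => ?_⟩
  have h1 : u - Gt (Q f) ∈ B.dualCoannihilator ⊓ LinearMap.ker T :=
    Submodule.mem_inf.mpr ⟨Submodule.sub_mem _ hu (hkey ▸ hvB),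
      by rw [LinearMap.mem_ker, map_sub, hTG, hTu, sub_self]⟩
  rw [huniq, Submodule.mem_bot] at h1
  exact sub_eq_zero.mp h1
end

section
/- Let F be a vector space over a field K, let T : F → F be a surjective linear map whose kernel is n-dimensional with basis u_1, …, u_n, and let B ≤ F* be a subspace with basis β_1, …, β_n. Then F = Ker T ∔ B^⊥ (i.e., the boundary problem (T, B) is regular) if and only if the n×n evaluation matrix β(u) = (β_i(u_j)) over K is invertible. -/
/-- Let T : F → F be surjective with n-dimensional kernel having basis
u_1,…,u_n, and let B ≤ F* have basis β_1,…,β_n. Then F = Ker T ∔ B^⊥ iff the n×n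
evaluation matrix β(u) = (β_i(u_j)) is invertible. -/
theorem stmt5 {K F : Type*} [Field K] [AddCommGroup F] [Module K F]
    {n : ℕ} (T : F →ₗ[K] F) (hT : Function.Surjective T)
    (u : Module.Basis (Fin n) K (LinearMap.ker T))
    (B : Submodule K (Module.Dual K F)) (β : Module.Basis (Fin n) K B)
    (M : Matrix (Fin n) (Fin n) K) (hM : ∀ i j, M i j = (β i : Module.Dual K F) (u j : F)) :
    IsCompl (LinearMap.ker T) B.dualCoannihilator ↔ IsUnit M := by
  classical
  -- the evaluation map φ : F →ₗ (Fin n → K)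
  set φ : F →ₗ[K] (Fin n → K) := LinearMap.pi (fun i => (β i : Module.Dual K F)) with hφ
  have hφapp : ∀ v i, φ v i = (β i : Module.Dual K F) v := fun v i => rfl
  -- kernel of φ is B^⊥
  have hker : LinearMap.ker φ = B.dualCoannihilator := by
    ext v
    simp only [LinearMap.mem_ker, Submodule.mem_dualCoannihilator]
    constructor
    · intro h b hb
      have hb' : (⟨b, hb⟩ : B) = ∑ i, β.repr ⟨b, hb⟩ i • β i := (β.sum_repr ⟨b, hb⟩).symm
      have : b = ∑ i, β.repr ⟨b, hb⟩ i • (β i : Module.Dual K F) := by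
        have := congrArg (Subtype.val) hb'
        simpa only [AddSubmonoidClass.coe_finset_sum, SetLike.val_smul] using this
      rw [this]
      have h0 : ∀ i, (β i : Module.Dual K F) v = 0 := fun i => congrFun h i
      simp [LinearMap.sum_apply, h0]
    · intro h
      funext i
      exact h (β i : Module.Dual K F) (β i).2
  -- restriction of φ to the kernel of T
  set φN : (LinearMap.ker T) →ₗ[K] (Fin n → K) := φ.comp (LinearMap.ker T).subtype with hφN
  -- φN in coordinates is mulVec by M
  have hcoord : ∀ x : Fin n → K, φN (u.equivFun.symm x) = M.mulVec x := by
    intro x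
    funext i
    rw [Module.Basis.equivFun_symm_apply]
    simp only [hφN, LinearMap.comp_apply, Submodule.coe_subtype, map_sum]
    simp only [SetLike.val_smul, map_smul, Finset.sum_apply, Pi.smul_apply, smul_eq_mul,
      hφapp, Matrix.mulVec, dotProduct, hM]
    exact Finset.sum_congr rfl fun j _ => mul_comm _ _
  have hinj : Function.Injective φN ↔ IsUnit M := by
    rw [← Matrix.mulVec_injective_iff_isUnit]
    constructor
    · intro h x y hxy
      have : φN (u.equivFun.symm x) = φN (u.equivFun.symm y) := by rw [hcoord, hcoord, hxy]
      exact u.equivFun.symm.injective (h this)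
    · intro h a b hab
      have : M.mulVec (u.equivFun a) = M.mulVec (u.equivFun b) := by
        rw [← hcoord, ← hcoord, u.equivFun.symm_apply_apply, u.equivFun.symm_apply_apply, hab]
      have := h this
      exact u.equivFun.injective this
  rw [← hker, ← hinj]
  have hfd : FiniteDimensional K (LinearMap.ker T) := Module.Finite.of_basis u
  have hrankN : Module.finrank K (LinearMap.ker T) = n := by
    rw [Module.finrank_eq_card_basis u, Fintype.card_fin]
  constructor
  · intro hc x y hxy
    have hmem : ((x - y : LinearMap.ker T) : F) ∈ LinearMap.ker T ⊓ LinearMap.ker φ := by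
      refine ⟨(x - y).2, ?_⟩
      have : φN (x - y) = 0 := by rw [map_sub, hxy, sub_self]
      simpa [hφN] using this
    rw [hc.inf_eq_bot] at hmem
    have : (x - y : LinearMap.ker T) = 0 := Subtype.ext hmem
    exact sub_eq_zero.mp this
  · intro hinjN
    have hsurjN : Function.Surjective φN := by
      have hrk : Module.finrank K (LinearMap.ker T) = Module.finrank K (Fin n → K) := by
        rw [hrankN, Module.finrank_pi]; simp
      exact (LinearMap.injective_iff_surjective_of_finrank_eq_finrank hrk).mp hinjN
    constructor
    · rw [disjoint_iff]
      rw [Submodule.eq_bot_iff]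
      rintro v ⟨hv1, hv2⟩
      have : φN ⟨v, hv1⟩ = 0 := by simpa [hφN] using hv2
      have := hinjN (a₁ := ⟨v, hv1⟩) (a₂ := 0) (by simpa using this)
      simpa using congrArg Subtype.val this
    · rw [codisjoint_iff, eq_top_iff]
      intro v _
      obtain ⟨w, hw⟩ := hsurjN (φ v)
      have hmem : v - (w : F) ∈ LinearMap.ker φ := by
        rw [LinearMap.mem_ker, map_sub]
        have : φ (w : F) = φ v := hw
        rw [this, sub_self]
      have : v = (w : F) + (v - (w : F)) := by abel
      rw [this]
      exact Submodule.add_mem_sup w.2 hmem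
end

section
/- Let (T_1, B_1) and (T_2, B_2) be regular boundary problems on a vector space F over a field K, with Green's operators G_1 and G_2 respectively. Then the composite boundary problem (T_1 ∘ T_2, T_2*(B_1) + B_2) is a regular boundary problem, and its Green's operator is G_2 ∘ G_1. -/
lemma dualCoann_map_dualMap {K F : Type*} [Field K] [AddCommGroup F] [Module K F]
    (T : F →ₗ[K] F) (B : Submodule K (Module.Dual K F)) :
    (Submodule.map T.dualMap B).dualCoannihilator = Submodule.comap T B.dualCoannihilator := by
  ext v
  simp only [Submodule.mem_dualCoannihilator, Submodule.mem_comap]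
  constructor
  · intro h β hβ
    exact h (T.dualMap β) ⟨β, hβ, rfl⟩
  · rintro h φ ⟨β, hβ, rfl⟩
    exact h β hβ

/-- If (T_1, B_1) and (T_2, B_2) are regular boundary problems with Green's
operators G_1, G_2, then (T_1 ∘ T_2, T_2*(B_1) + B_2) is a regular boundary problem with
Green's operator G_2 ∘ G_1. -/
theorem stmt6 {K F : Type*} [Field K] [AddCommGroup F] [Module K F]
    (T₁ T₂ : F →ₗ[K] F) (hT₁ : Function.Surjective T₁) (hT₂ : Function.Surjective T₂)
    (B₁ B₂ : Submodule K (Module.Dual K F))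
    (hB₁ : FiniteDimensional K B₁) (hB₂ : FiniteDimensional K B₂)
    (hreg₁ : IsCompl (LinearMap.ker T₁) B₁.dualCoannihilator)
    (hreg₂ : IsCompl (LinearMap.ker T₂) B₂.dualCoannihilator)
    (G₁ G₂ : F →ₗ[K] F)
    (hG₁ : ∀ f, T₁ (G₁ f) = f ∧ G₁ f ∈ B₁.dualCoannihilator)
    (hG₂ : ∀ f, T₂ (G₂ f) = f ∧ G₂ f ∈ B₂.dualCoannihilator) :
    Function.Surjective (T₁ ∘ₗ T₂) ∧
    FiniteDimensional K (Submodule.map T₂.dualMap B₁ ⊔ B₂ : Submodule K (Module.Dual K F)) ∧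
    IsCompl (LinearMap.ker (T₁ ∘ₗ T₂))
      (Submodule.map T₂.dualMap B₁ ⊔ B₂).dualCoannihilator ∧
    ∀ f, (T₁ ∘ₗ T₂) ((G₂ ∘ₗ G₁) f) = f ∧
      (G₂ ∘ₗ G₁) f ∈ (Submodule.map T₂.dualMap B₁ ⊔ B₂).dualCoannihilator := by
  have hco : (Submodule.map T₂.dualMap B₁ ⊔ B₂).dualCoannihilator
      = Submodule.comap T₂ B₁.dualCoannihilator ⊓ B₂.dualCoannihilator := by
    rw [Submodule.dualCoannihilator_sup_eq, dualCoann_map_dualMap]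
  refine ⟨hT₁.comp hT₂, ?_, ⟨?_, ?_⟩, ?_⟩
  · have : FiniteDimensional K (Submodule.map T₂.dualMap B₁) :=
      Module.Finite.map _ _
    exact Submodule.finiteDimensional_sup _ _
  · -- disjoint
    rw [disjoint_iff_inf_le]
    intro u hu
    obtain ⟨hk, hm⟩ := hu
    rw [hco] at hm
    obtain ⟨hm1, hm2⟩ := hm
    have hT2u : T₂ u ∈ LinearMap.ker T₁ ⊓ B₁.dualCoannihilator := ⟨hk, hm1⟩
    rw [hreg₁.inf_eq_bot] at hT2u
    have : u ∈ LinearMap.ker T₂ ⊓ B₂.dualCoannihilator := ⟨hT2u, hm2⟩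
    rwa [hreg₂.inf_eq_bot] at this
  · -- codisjoint
    rw [codisjoint_iff_le_sup]
    intro f _
    set u := G₂ (G₁ (T₁ (T₂ f))) with hu
    have humem : u ∈ (Submodule.map T₂.dualMap B₁ ⊔ B₂).dualCoannihilator := by
      rw [hco]
      refine ⟨?_, (hG₂ _).2⟩
      rw [SetLike.mem_coe, Submodule.mem_comap, (hG₂ _).1]
      exact (hG₁ _).2
    have hker : f - u ∈ LinearMap.ker (T₁ ∘ₗ T₂) := by
      simp only [LinearMap.mem_ker, LinearMap.comp_apply, map_sub, hu,
        (hG₂ _).1, (hG₁ _).1, sub_self]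
    have := Submodule.add_mem_sup hker humem
    simpa using this
  · intro f
    constructor
    · simp only [LinearMap.comp_apply, (hG₂ _).1, (hG₁ _).1]
    · rw [hco]
      refine ⟨?_, (hG₂ _).2⟩
      rw [SetLike.mem_coe, Submodule.mem_comap, LinearMap.comp_apply, (hG₂ _).1]
      exact (hG₁ _).2
end

section
/- Let (T, B) be a regular boundary problem on a vector space F over a field K, and suppose T = T_1 ∘ T_2 where T_1, T_2 : F → F are surjective linear maps with finite-dimensional kernels. Then there exist finite-dimensional subspaces B_1, B_2 ≤ F* with B_2 ≤ B such that the boundary problems (T_1, B_1) and (T_2, B_2) are regular and (T, B) = (T_1, B_1) ∘ (T_2, B_2), i.e., T_2*(B_1) + B_2 = B. -/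
set_option maxHeartbeats 1000000 in
/-- Every factorization T = T_1 ∘ T_2 of the differential operator of a
regular boundary problem (T, B) lifts to a factorization (T, B) = (T_1, B_1) ∘ (T_2, B_2)
into regular boundary problems with B_2 ≤ B. -/
theorem stmt7 {K F : Type*} [Field K] [AddCommGroup F] [Module K F]
    (T T₁ T₂ : F →ₗ[K] F) (hfact : T = T₁ ∘ₗ T₂)
    (hT₁ : Function.Surjective T₁) (hT₂ : Function.Surjective T₂)
    (hker₁ : FiniteDimensional K (LinearMap.ker T₁))
    (hker₂ : FiniteDimensional K (LinearMap.ker T₂))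
    (B : Submodule K (Module.Dual K F)) (hB : FiniteDimensional K B)
    (hreg : IsCompl (LinearMap.ker T) B.dualCoannihilator) :
    ∃ B₁ B₂ : Submodule K (Module.Dual K F),
      FiniteDimensional K B₁ ∧ FiniteDimensional K B₂ ∧ B₂ ≤ B ∧
      IsCompl (LinearMap.ker T₁) B₁.dualCoannihilator ∧
      IsCompl (LinearMap.ker T₂) B₂.dualCoannihilator ∧
      Submodule.map T₂.dualMap B₁ ⊔ B₂ = B := by
  classical
  haveI := hker₁; haveI := hker₂; haveI := hB
  set N := LinearMap.ker T with hN
  have hle : LinearMap.ker T₂ ≤ N := by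
    intro v hv
    have hv' : T₂ v = 0 := hv
    simp [hN, LinearMap.mem_ker, hfact, hv']
  have hmaps : ∀ v ∈ N, T₂ v ∈ LinearMap.ker T₁ := by
    intro v hv
    have : T v = 0 := hv
    rw [hfact] at this
    exact this
  let g : N →ₗ[K] LinearMap.ker T₁ := T₂.restrict hmaps
  have hkerg : LinearMap.ker g = (LinearMap.ker T₂).comap N.subtype := by
    ext x
    simp [g, LinearMap.mem_ker, LinearMap.restrict_apply, Subtype.ext_iff]
  haveI hNfd : FiniteDimensional K N := by
    haveI h1 : FiniteDimensional K (LinearMap.ker g) := by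
      rw [hkerg]
      exact FiniteDimensional.of_injective
        (Submodule.comapSubtypeEquivOfLe hle).toLinearMap
        (Submodule.comapSubtypeEquivOfLe hle).injective
    haveI h2 : FiniteDimensional K (N ⧸ LinearMap.ker g) :=
      g.quotKerEquivRange.symm.finiteDimensional
    exact IsNoetherian.iff_fg.mp
      ((isNoetherian_iff_submodule_quotient (LinearMap.ker g)).mpr
        ⟨IsNoetherian.iff_fg.mpr h1, IsNoetherian.iff_fg.mpr h2⟩)
  -- the restriction map B → Dual K N
  let r : B →ₗ[K] Module.Dual K N := (N.subtype.dualMap).comp B.subtype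
  have hr_apply : ∀ (β : B) (x : N), r β x = (β : Module.Dual K F) (x : F) :=
    fun _ _ => rfl
  have hr_inj : Function.Injective r := by
    intro β₁ β₂ h
    apply Subtype.ext
    apply LinearMap.ext
    intro v
    obtain ⟨y, z, hy, hz, rfl⟩ :=
      Submodule.codisjoint_iff_exists_add_eq.mp hreg.codisjoint v
    have h1 : (β₁ : Module.Dual K F) y = (β₂ : Module.Dual K F) y := by
      have := congrFun (congrArg DFunLike.coe h) ⟨y, hy⟩
      simpa [hr_apply] using this
    have h2 : (β₁ : Module.Dual K F) z = (β₂ : Module.Dual K F) z := by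
      rw [Submodule.mem_dualCoannihilator] at hz
      rw [hz _ β₁.2, hz _ β₂.2]
    simp [h1, h2]
  have hdim : Module.finrank K B = Module.finrank K (Module.Dual K N) := by
    rw [Subspace.dual_finrank_eq]
    apply le_antisymm
    · exact (LinearMap.finrank_le_finrank_of_injective hr_inj).trans_eq
        Subspace.dual_finrank_eq
    · have e1 : (F ⧸ B.dualCoannihilator) ≃ₗ[K] N :=
        Submodule.quotientEquivOfIsCompl _ _ hreg.symm
      haveI : FiniteDimensional K (F ⧸ B.dualCoannihilator) :=
        e1.symm.finiteDimensional
      have e2 : (F ⧸ B.dualCoannihilator) ≃ₗ[K] Module.Dual K B :=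
        LinearEquiv.ofBijective _ (Subspace.quotDualCoannihilatorToDual_bijective B)
      calc Module.finrank K N = Module.finrank K (F ⧸ B.dualCoannihilator) :=
            e1.symm.finrank_eq
        _ = Module.finrank K (Module.Dual K B) := e2.finrank_eq
        _ = Module.finrank K B := Subspace.dual_finrank_eq (K := K) (V := B)
        _ ≤ Module.finrank K B := le_rfl
  let e : B ≃ₗ[K] Module.Dual K N :=
    LinearMap.linearEquivOfInjective (K := K) (V := B) (V₂ := Module.Dual K N) r hr_inj hdim
  have he_apply : ∀ (β : B) (x : N), e β x = (β : Module.Dual K F) (x : F) := by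
    intro β x
    rw [show e β = r β from LinearMap.linearEquivOfInjective_apply hr_inj hdim β]
    exact hr_apply β x
  -- basis of N adapted to ker T₂
  let p : Submodule K N := (LinearMap.ker T₂).comap N.subtype
  obtain ⟨q, hpq⟩ := p.exists_isCompl
  let eq2 : (p × q) ≃ₗ[K] N := Submodule.prodEquivOfIsCompl p q hpq
  let bp := Module.finBasis K p
  let bq := Module.finBasis K q
  let bN : Module.Basis _ K N := (bp.prod bq).map eq2
  have hprod_inl : ∀ i, bN (Sum.inl i) = ((bp i : N)) := by
    intro i
    rw [show bN (Sum.inl i) = eq2 ((bp.prod bq) (Sum.inl i)) from Module.Basis.map_apply _ _ _,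
      Module.Basis.prod_apply]
    rw [show eq2 = Submodule.prodEquivOfIsCompl p q hpq from rfl,
      Submodule.coe_prodEquivOfIsCompl']
    simp
  have hbN_inl : ∀ i, ((bN (Sum.inl i) : N) : F) ∈ LinearMap.ker T₂ := by
    intro i
    rw [hprod_inl]
    exact (bp i).2
  have hrepr_p : ∀ (x : N), (x : F) ∈ LinearMap.ker T₂ →
      ∀ j, bN.repr x (Sum.inr j) = 0 := by
    intro x hx j
    have hxp : x ∈ p := hx
    have hx' : eq2 (⟨x, hxp⟩, (0 : q)) = x := by
      rw [show eq2 = Submodule.prodEquivOfIsCompl p q hpq from rfl,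
        Submodule.coe_prodEquivOfIsCompl']
      simp
    have hmapr : ∀ (y : N), bN.repr y = (bp.prod bq).repr (eq2.symm y) :=
      fun y => rfl
    rw [← hx', hmapr, LinearEquiv.symm_apply_apply, Module.Basis.prod_repr_inr]
    simp
  -- the adapted "dual basis" inside B
  let βf : (Fin (Module.finrank K p) ⊕ Fin (Module.finrank K q)) → B :=
    fun i => e.symm (bN.dualBasis i)
  have hβf : ∀ i (x : N), ((βf i : Module.Dual K F)) (x : F) = bN.dualBasis i x := by
    intro i x
    rw [← he_apply, LinearEquiv.apply_symm_apply]
  -- the lifted functionals γ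
  have hγ_exists : ∀ j, ∃ γ : Module.Dual K F,
      T₂.dualMap γ = (βf (Sum.inr j) : Module.Dual K F) := by
    intro j
    have hmem : (βf (Sum.inr j) : Module.Dual K F) ∈
        (LinearMap.ker T₂).dualAnnihilator := by
      rw [Submodule.mem_dualAnnihilator]
      intro v hv
      have h0 : ((βf (Sum.inr j) : Module.Dual K F)) ((⟨v, hle hv⟩ : N) : F) = 0 := by
        rw [hβf, Module.Basis.dualBasis_apply]
        exact hrepr_p ⟨v, hle hv⟩ hv j
      exact h0
    rw [← LinearMap.range_dualMap_eq_dualAnnihilator_ker_of_surjective T₂ hT₂] at hmem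
    exact hmem
  choose γ hγ using hγ_exists
  have hγ_app : ∀ j (x : F), γ j (T₂ x) = (βf (Sum.inr j) : Module.Dual K F) x := by
    intro j x
    exact congrFun (congrArg DFunLike.coe (hγ j)) x
  -- definitions of B₁ and B₂
  refine ⟨Submodule.span K (Set.range γ),
    Submodule.span K (Set.range fun i => (βf (Sum.inl i) : Module.Dual K F)),
    ?_, ?_, ?_, ?_, ?_, ?_⟩
  · exact FiniteDimensional.span_of_finite K (Set.finite_range _)
  · exact FiniteDimensional.span_of_finite K (Set.finite_range _)
  · rw [Submodule.span_le]
    rintro _ ⟨i, rfl⟩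
    exact (βf (Sum.inl i)).2
  · -- IsCompl (ker T₁) B₁^⊥
    constructor
    · rw [Submodule.disjoint_def]
      intro x hx1 hx2
      rw [Submodule.mem_dualCoannihilator] at hx2
      obtain ⟨v, rfl⟩ := hT₂ x
      have hvN : v ∈ N := by
        have h0 : T₁ (T₂ v) = 0 := hx1
        simpa [hN, LinearMap.mem_ker, hfact] using h0
      set n : N := ⟨v, hvN⟩ with hn
      have hvsum : v = ∑ i, bN.repr n i • ((bN i : N) : F) := by
        have h0 := congrArg N.subtype (bN.sum_repr n)
        simpa [map_sum, map_smul, -Module.Basis.sum_repr] using h0.symm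
      have hsum : T₂ v = ∑ i, bN.repr n i • T₂ ((bN i : N) : F) := by
        rw [hvsum, map_sum]
        simp [map_smul]
      rw [hsum, Fintype.sum_sum_type]
      have hz1 : ∀ i, bN.repr n (Sum.inl i) • T₂ ((bN (Sum.inl i) : N) : F) = 0 := by
        intro i
        rw [show T₂ ((bN (Sum.inl i) : N) : F) = 0 from hbN_inl i, smul_zero]
      have hz2 : ∀ j, bN.repr n (Sum.inr j) = 0 := by
        intro j
        have h0 : γ j (T₂ v) = 0 := hx2 (γ j) (Submodule.subset_span ⟨j, rfl⟩)
        rw [hγ_app j v] at h0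
        have h1 : (βf (Sum.inr j) : Module.Dual K F) ((n : N) : F) = 0 := h0
        rw [hβf, Module.Basis.dualBasis_apply] at h1
        exact h1
      simp [hz1, hz2]
    · rw [codisjoint_iff, eq_top_iff]
      intro v _
      set u : F := ∑ j, γ j v • T₂ ((bN (Sum.inr j) : N) : F) with hu
      have huk : u ∈ LinearMap.ker T₁ := by
        apply Submodule.sum_mem
        intro j _
        apply Submodule.smul_mem
        exact hmaps _ (bN (Sum.inr j)).2
      have hdelta : ∀ j j', γ j (T₂ ((bN (Sum.inr j') : N) : F)) =
          if j' = j then 1 else 0 := by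
        intro j j'
        rw [hγ_app, hβf, Module.Basis.dualBasis_apply_self]
        simp [Sum.inr.injEq]
      have hrest : v - u ∈ (Submodule.span K (Set.range γ)).dualCoannihilator := by
        rw [Submodule.mem_dualCoannihilator]
        intro φ hφ
        induction hφ using Submodule.span_induction with
        | mem φ hφ' =>
          obtain ⟨j, rfl⟩ := hφ'
          simp only [map_sub, hu, map_sum, map_smul, hdelta, smul_eq_mul,
            mul_ite, mul_one, mul_zero]
          rw [Finset.sum_ite_eq' Finset.univ j (fun j' => γ j' v)]
          simp
        | zero => simp
        | add φ ψ _ _ h1 h2 => simp [LinearMap.add_apply, h1, h2]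
        | smul c φ _ h1 => simp [LinearMap.smul_apply, h1]
      rw [Submodule.mem_sup]
      exact ⟨u, huk, v - u, hrest, by abel⟩
  · -- IsCompl (ker T₂) B₂^⊥
    constructor
    · rw [Submodule.disjoint_def]
      intro v hv1 hv2
      rw [Submodule.mem_dualCoannihilator] at hv2
      set n : N := ⟨v, hle hv1⟩ with hn
      have h0 : n = 0 := by
        apply (Module.Basis.forall_coord_eq_zero_iff bN).mp
        intro i
        rw [Module.Basis.coord_apply]
        rcases i with i | j
        · have h1 : (βf (Sum.inl i) : Module.Dual K F) v = 0 :=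
            hv2 _ (Submodule.subset_span ⟨i, rfl⟩)
          have h2 := hβf (Sum.inl i) n
          rw [Module.Basis.dualBasis_apply] at h2
          rw [← h2]
          exact h1
        · exact hrepr_p n hv1 j
      have : v = 0 := congrArg Subtype.val h0
      exact this
    · rw [codisjoint_iff, eq_top_iff]
      intro v _
      set u : F := ∑ i, (βf (Sum.inl i) : Module.Dual K F) v • ((bN (Sum.inl i) : N) : F)
        with hu
      have huk : u ∈ LinearMap.ker T₂ := by
        apply Submodule.sum_mem
        intro i _
        exact Submodule.smul_mem _ _ (hbN_inl i)
      have hdelta : ∀ i i', (βf (Sum.inl i) : Module.Dual K F)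
          ((bN (Sum.inl i') : N) : F) = if i' = i then 1 else 0 := by
        intro i i'
        rw [hβf, Module.Basis.dualBasis_apply_self]
        simp [Sum.inl.injEq]
      have hrest : v - u ∈ (Submodule.span K
          (Set.range fun i => (βf (Sum.inl i) : Module.Dual K F))).dualCoannihilator := by
        rw [Submodule.mem_dualCoannihilator]
        intro φ hφ
        induction hφ using Submodule.span_induction with
        | mem φ hφ' =>
          obtain ⟨i, rfl⟩ := hφ'
          simp only [map_sub, hu, map_sum, map_smul, hdelta, smul_eq_mul,
            mul_ite, mul_one, mul_zero]
          rw [Finset.sum_ite_eq' Finset.univ i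
            (fun i' => (βf (Sum.inl i') : Module.Dual K F) v)]
          simp
        | zero => simp
        | add φ ψ _ _ h1 h2 => simp [LinearMap.add_apply, h1, h2]
        | smul c φ _ h1 => simp [LinearMap.smul_apply, h1]
      rw [Submodule.mem_sup]
      exact ⟨u, huk, v - u, hrest, by abel⟩
  · -- the factorization of boundary spaces
    apply le_antisymm
    · apply sup_le
      · rw [Submodule.map_span, Submodule.span_le]
        rintro _ ⟨_, ⟨j, rfl⟩, rfl⟩
        rw [hγ j]
        exact (βf (Sum.inr j)).2
      · rw [Submodule.span_le]
        rintro _ ⟨i, rfl⟩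
        exact (βf (Sum.inl i)).2
    · intro β hβ
      set βB : B := ⟨β, hβ⟩ with hβB
      have hexp : βB = ∑ i, β ((bN i : N) : F) • βf i := by
        apply e.injective
        rw [map_sum]
        simp only [map_smul, βf, LinearEquiv.apply_symm_apply]
        have h0 := bN.dualBasis.sum_repr (e βB)
        rw [← h0]
        refine Finset.sum_congr rfl fun i _ => ?_
        rw [Module.Basis.dualBasis_repr, he_apply]
      rw [show β = (βB : Module.Dual K F) from rfl, hexp]
      rw [AddSubmonoidClass.coe_finset_sum]
      apply Submodule.sum_mem
      intro i _
      rw [SetLike.val_smul]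
      apply Submodule.smul_mem
      rcases i with i | j
      · exact Submodule.mem_sup_right (Submodule.subset_span ⟨i, rfl⟩)
      · apply Submodule.mem_sup_left
        rw [← hγ j]
        exact Submodule.mem_map_of_mem (Submodule.subset_span ⟨j, rfl⟩)
end

section
/- Let F be a vector space over a field K, let T : F → F be a surjective linear map, and let B ≤ F* be a finite-dimensional subspace. Then (T(B^⊥))^⊥ = (T*)^{-1}(B), i.e., a functional φ ∈ F* annihilates T(B^⊥) if and only if φ ∘ T ∈ B. -/
/-- For a surjective linear map T : F → F and a finite-dimensional subspace
B ≤ F*, one has (T(B^⊥))^⊥ = (T*)^{-1}(B). -/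
theorem stmt8 {K F : Type*} [Field K] [AddCommGroup F] [Module K F]
    (T : F →ₗ[K] F) (hT : Function.Surjective T)
    (B : Submodule K (Module.Dual K F)) (hB : FiniteDimensional K B) :
    (Submodule.map T B.dualCoannihilator).dualAnnihilator =
      Submodule.comap T.dualMap B := by
  have hB' := Subspace.dualCoannihilator_dualAnnihilator_eq (W := B)
  ext φ
  rw [Submodule.mem_dualAnnihilator, Submodule.mem_comap]
  constructor
  · intro h
    rw [← hB', Submodule.mem_dualAnnihilator]
    intro v hv
    exact h (T v) ⟨v, hv, rfl⟩
  · intro h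
    rw [← hB', Submodule.mem_dualAnnihilator] at h
    rintro x ⟨v, hv, rfl⟩
    exact h v hv
end

section
/- Let f : ℝ → ℝ be continuous and define u : ℝ → ℝ by u(x) = x·∫_0^x f(ξ) dξ − ∫_0^x ξ f(ξ) dξ − (1/2)(x² + 1)·∫_0^1 f(ξ) dξ + ∫_0^1 ξ f(ξ) dξ. Then u is twice differentiable and satisfies u''(x) = f(x) − ∫_0^1 f(ξ) dξ for all x ∈ ℝ, together with u'(0) = 0, u'(1) = 0 and u(1) = 0. -/
/-- For continuous f, the function
u(x) = x·∫_0^x f − ∫_0^x ξf(ξ)dξ − (1/2)(x²+1)·∫_0^1 f + ∫_0^1 ξf(ξ)dξ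
is twice differentiable with u''(x) = f(x) − ∫_0^1 f, u'(0) = 0, u'(1) = 0 and u(1) = 0
(generalized Green's operator of the singular problem u'' = f, u'(0) = u'(1) = u(1) = 0). -/
theorem stmt16 (f : ℝ → ℝ) (hf : Continuous f) (u : ℝ → ℝ)
    (hu : ∀ x, u x = x * (∫ ξ in (0:ℝ)..x, f ξ) - (∫ ξ in (0:ℝ)..x, ξ * f ξ)
        - (1/2) * (x^2 + 1) * (∫ ξ in (0:ℝ)..1, f ξ) + (∫ ξ in (0:ℝ)..1, ξ * f ξ)) :
    ∃ u' : ℝ → ℝ, (∀ x, HasDerivAt u (u' x) x) ∧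
      (∀ x, HasDerivAt u' (f x - ∫ ξ in (0:ℝ)..1, f ξ) x) ∧
      u' 0 = 0 ∧ u' 1 = 0 ∧ u 1 = 0 := by
  set C : ℝ := ∫ ξ in (0:ℝ)..1, f ξ with hC
  have hg : Continuous (fun ξ : ℝ => ξ * f ξ) := continuous_id.mul hf
  refine ⟨fun x => (∫ ξ in (0:ℝ)..x, f ξ) - x * C, ?_, ?_, ?_, ?_, ?_⟩
  · intro x
    have hF : HasDerivAt (fun y => ∫ ξ in (0:ℝ)..y, f ξ) (f x) x :=
      intervalIntegral.integral_hasDerivAt_right (hf.intervalIntegrable _ _)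
        (hf.stronglyMeasurableAtFilter _ _) hf.continuousAt
    have hG : HasDerivAt (fun y => ∫ ξ in (0:ℝ)..y, ξ * f ξ) (x * f x) x :=
      intervalIntegral.integral_hasDerivAt_right (hg.intervalIntegrable _ _)
        (hg.stronglyMeasurableAtFilter _ _) hg.continuousAt
    have key := ((((hasDerivAt_id x).mul hF).sub hG).sub
      ((((hasDerivAt_pow 2 x).add_const 1).const_mul (1/2)).mul_const C)).add_const
      (∫ ξ in (0:ℝ)..1, ξ * f ξ)
    have hequ : u = fun y => y * (∫ ξ in (0:ℝ)..y, f ξ) - (∫ ξ in (0:ℝ)..y, ξ * f ξ)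
        - (1/2) * (y^2 + 1) * C + (∫ ξ in (0:ℝ)..1, ξ * f ξ) := funext hu
    rw [hequ]
    refine key.congr_deriv ?_
    simp only [id_eq]
    ring
  · intro x
    have hF : HasDerivAt (fun y => ∫ ξ in (0:ℝ)..y, f ξ) (f x) x :=
      intervalIntegral.integral_hasDerivAt_right (hf.intervalIntegrable _ _)
        (hf.stronglyMeasurableAtFilter _ _) hf.continuousAt
    have := hF.sub ((hasDerivAt_id x).mul_const C)
    simpa [Pi.sub_def] using this
  · simp
  · simp [hC]
  · rw [hu 1]; ring
end

section
/- Let T : F → G be a linear map of vector spaces over a field K with transpose T* : G* → F*, and let B ≤ G* be an orthogonally closed subspace, i.e., B = (B^⊥)^⊥. Then the image T*(B) ≤ F* is orthogonally closed: T*(B) = ((T*(B))^⊥)^⊥. -/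
/-- The image of an orthogonally closed subspace B ≤ G* under the transpose
T* : G* → F* of a linear map T : F → G is orthogonally closed. -/
theorem stmt19 {K F G : Type*} [Field K] [AddCommGroup F] [Module K F]
    [AddCommGroup G] [Module K G]
    (T : F →ₗ[K] G) (B : Submodule K (Module.Dual K G))
    (hB : B.dualCoannihilator.dualAnnihilator = B) :
    (Submodule.map T.dualMap B).dualCoannihilator.dualAnnihilator =
      Submodule.map T.dualMap B := by
  refine le_antisymm ?_ (Submodule.le_dualCoannihilator_dualAnnihilator _)
  intro f hf
  set U := B.dualCoannihilator with hU
  set S : F →ₗ[K] G ⧸ U := U.mkQ.comp T with hS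
  have hker : LinearMap.ker S ≤ LinearMap.ker f := by
    intro x hx
    have hTx : T x ∈ U := by
      simpa [hS, Submodule.Quotient.mk_eq_zero] using hx
    rw [Submodule.mem_dualAnnihilator] at hf
    refine hf x ?_
    rw [Submodule.mem_dualCoannihilator]
    rintro φ ⟨β, hβ, rfl⟩
    rw [Submodule.mem_dualCoannihilator] at hTx
    exact hTx β hβ
  set fbar : (F ⧸ LinearMap.ker S) →ₗ[K] K := (LinearMap.ker S).liftQ f hker
  set e := S.quotKerEquivRange
  set φ : LinearMap.range S →ₗ[K] K := fbar.comp (e.symm : LinearMap.range S →ₗ[K] _)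
  obtain ⟨ψ, hψ⟩ := φ.exists_extend
  set β : Module.Dual K G := ψ.comp U.mkQ with hβdef
  have hβB : β ∈ B := by
    rw [← hB, Submodule.mem_dualAnnihilator]
    intro g hg
    have : U.mkQ g = 0 := (Submodule.Quotient.mk_eq_zero U).mpr hg
    simp [hβdef, this]
  refine ⟨β, hβB, ?_⟩
  ext x
  have hx : S x ∈ LinearMap.range S := LinearMap.mem_range_self S x
  have h1 : ψ (S x) = φ ⟨S x, hx⟩ := by
    have := congrArg (fun g => g ⟨S x, hx⟩) hψ
    simpa using this
  have h2 : e (Submodule.Quotient.mk x) = ⟨S x, hx⟩ :=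
    Subtype.ext (S.quotKerEquivRange_apply_mk x)
  have h3 : e.symm ⟨S x, hx⟩ = Submodule.Quotient.mk x := by
    rw [← h2, LinearEquiv.symm_apply_apply]
  calc T.dualMap β x = ψ (S x) := rfl
    _ = fbar (e.symm ⟨S x, hx⟩) := h1
    _ = fbar (Submodule.Quotient.mk x) := by rw [h3]
    _ = f x := rfl
end
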